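/- Let T₀ ≥ 1 and τ : {0,1,…,T₀} → ℤ satisfy τ(1) > τ(0) = 0. Then the ℤ-rank of ℍ_red(R_τ,χ_τ) equals min_{0≤i≤T₀} τ(i) + Σ_{i=0}^{T₀−1} max{τ(i) − τ(i+1), 0}; moreover, in the decomposition ℍ(R_τ,χ_τ) ≅ T⁺_{2m} ⊕ ℍ_red(R_τ,χ_τ), the index satisfies m = min_{0≤i≤T₀} τ(i) = min_{v} χ_τ(v). -/

import Mathlib

noncomputable section

/-- `T⁺₀ = ℤ[U,U⁻¹]/(U·ℤ[U])`, modeled as finitely supported functions `ℕ → ℤ`;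
`Finsupp.single h 1` represents `U^{-h}`, which is homogeneous of degree `2h`. -/
abbrev TPlus : Type := ℕ →₀ ℤ

/-- The `U`-action on `T⁺₀`: `U · U^{-h} = U^{-(h-1)}` for `h ≥ 1`, `U · U^0 = 0`. -/
def shiftU : TPlus →ₗ[ℤ] TPlus where
  toFun f := Finsupp.comapDomain (· + 1) f (fun a _ b _ h => by simpa using h)
  map_add' f g := by
    ext h
    exact rfl
  map_smul' c f := by
    ext h
    exact rfl

lemma shiftU_apply (f : TPlus) (h : ℕ) : shiftU f h = f (h + 1) := rfl

/-- The submodule `T₀(n) ⊂ T⁺₀` spanned by `U^{-h}`, `0 ≤ h ≤ n-1`. -/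
def Tower (n : ℕ) : Submodule ℤ TPlus where
  carrier := {f | ∀ h, n ≤ h → f h = 0}
  add_mem' := by
    intro a b ha hb h hh
    simp [Finsupp.add_apply, ha h hh, hb h hh]
  zero_mem' := by intro h hh; rfl
  smul_mem' := by
    intro c f hf h hh
    simp [Finsupp.smul_apply, hf h hh]

/-- Homogeneity of degree `d` in the shifted module `T⁺_r` or `T_r(n)`:
the coefficient of `U^{-h}` has degree `2h + r`. -/
def THomog (r d : ℚ) (f : TPlus) : Prop := ∀ h : ℕ, f h ≠ 0 → 2 * (h : ℚ) + r = d

/-- `ℍ(R,χ)` for a graph with vertex set `V`, adjacency `Adj` and grading `χ`: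
functions `φ` from vertices to `T⁺₀` with `U · φ(v) = φ(w)` along edges with `χ v < χ w`. -/
def Hmod {V : Type} (Adj : V → V → Prop) (χ : V → ℤ) : Submodule ℤ (V → TPlus) where
  carrier := {φ | ∀ v w, Adj v w → χ v < χ w → shiftU (φ v) = φ w}
  add_mem' := by
    intro a b ha hb v w hvw hχ
    simp only [Pi.add_apply, map_add, ha v w hvw hχ, hb v w hvw hχ]
  zero_mem' := by intro v w _ _; simp
  smul_mem' := by
    intro c f hf v w hvw hχ
    simp only [Pi.smul_apply, map_smul, hf v w hvw hχ]

lemma mem_Hmod {V : Type} {Adj : V → V → Prop} {χ : V → ℤ} {φ : V → TPlus} :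
    φ ∈ Hmod Adj χ ↔ ∀ v w, Adj v w → χ v < χ w → shiftU (φ v) = φ w := Iff.rfl

/-- The (pointwise) `U`-action on `ℍ(R,χ)`. -/
def HU {V : Type} (Adj : V → V → Prop) (χ : V → ℤ) : Hmod Adj χ →ₗ[ℤ] Hmod Adj χ where
  toFun φ := ⟨fun v => shiftU (φ.1 v), by
    intro v w hvw hχ
    show shiftU (shiftU (φ.1 v)) = shiftU (φ.1 w)
    rw [mem_Hmod.1 φ.2 v w hvw hχ]⟩
  map_add' a b := by
    apply Subtype.ext
    funext v
    simp
  map_smul' c a := by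
    apply Subtype.ext
    funext v
    simp

/-- Homogeneity of degree `d` in the shifted module `ℍ(R,χ)[r]`:
`φ` is homogeneous of degree `d` if each `φ(v)` is homogeneous of degree `d - r - 2χ(v)`
in `T⁺₀`. -/
def HHomog {V : Type} (χ : V → ℤ) (r d : ℚ) (φ : V → TPlus) : Prop :=
  ∀ v, THomog (2 * (χ v : ℚ) + r) d (φ v)

/-- The underlying module of a direct sum `T⁺ ⊕ ⊕_{i ∈ I} T(len i)`. -/
abbrev Targ {I : Type} (len : I → ℕ) : Type := TPlus × ((i : I) → Tower (len i))

def towerShift {n : ℕ} (f : Tower n) : Tower n :=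
  ⟨shiftU f.1, by
    intro h hh
    rw [shiftU_apply]
    exact f.2 (h + 1) (by omega)⟩

/-- The `U`-action on `Targ len`. -/
def TargU {I : Type} (len : I → ℕ) : Targ len →ₗ[ℤ] Targ len where
  toFun x := (shiftU x.1, fun i => towerShift (x.2 i))
  map_add' a b := by
    refine Prod.ext ?_ ?_
    · simp
    · funext i
      apply Subtype.ext
      simp [towerShift]
  map_smul' c a := by
    refine Prod.ext ?_ ?_
    · simp
    · funext i
      apply Subtype.ext
      simp [towerShift]

/-- Homogeneity of degree `d` in `T⁺_{r₀} ⊕ ⊕_{i ∈ I} T_{rI i}(len i)`. -/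
def TargHomog {I : Type} {len : I → ℕ} (r₀ : ℚ) (rI : I → ℚ) (d : ℚ) (x : Targ len) : Prop :=
  THomog r₀ d x.1 ∧ ∀ i, THomog (rI i) d ((x.2 i) : TPlus)

end

noncomputable section

/-- Pre-vertices of the graded root `R_τ` associated with `τ : {0,…,T₀} → ℤ`:
pairs `(i,k)` with `i ≤ T₀` and `τ i ≤ k`, representing the vertex `v_i^k`. -/
def RootVpre (T0 : ℕ) (τ : ℕ → ℤ) : Type := {x : ℕ × ℤ // x.1 ≤ T0 ∧ τ x.1 ≤ x.2}

/-- The identification `v_i^k ∼ v_j^k` whenever `k ≥ τ(l)` for every `l` between `i` and `j`. -/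
def RootSetoid (T0 : ℕ) (τ : ℕ → ℤ) : Setoid (RootVpre T0 τ) where
  r x y := x.1.2 = y.1.2 ∧
    ∀ l : ℕ, ((x.1.1 ≤ l ∧ l ≤ y.1.1) ∨ (y.1.1 ≤ l ∧ l ≤ x.1.1)) → τ l ≤ x.1.2
  iseqv := by
    constructor
    · intro x
      refine ⟨rfl, ?_⟩
      intro l hl
      have : l = x.1.1 := by omega
      rw [this]
      exact x.2.2
    · intro x y h
      refine ⟨h.1.symm, ?_⟩
      intro l hl
      rw [← h.1]
      exact h.2 l (by tauto)
    · intro x y z hxy hyz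
      refine ⟨hxy.1.trans hyz.1, ?_⟩
      intro l hl
      have h2 := hxy.2
      have h3 := hyz.2
      rcases (by omega :
          ((x.1.1 ≤ l ∧ l ≤ y.1.1) ∨ (y.1.1 ≤ l ∧ l ≤ x.1.1)) ∨
          ((y.1.1 ≤ l ∧ l ≤ z.1.1) ∨ (z.1.1 ≤ l ∧ l ≤ y.1.1))) with h | h
      · exact h2 l h
      · rw [hxy.1]
        exact h3 l h

/-- The vertex set of the graded root `R_τ`. -/
def RootV (T0 : ℕ) (τ : ℕ → ℤ) : Type := Quotient (RootSetoid T0 τ)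

/-- The grading `χ_τ` of `R_τ`. -/
def rootχ (T0 : ℕ) (τ : ℕ → ℤ) : RootV T0 τ → ℤ :=
  Quotient.lift (fun x : RootVpre T0 τ => x.1.2) (fun _ _ h => h.1)

/-- The vertex `v_i^{k+1}` above `v_i^k`. -/
def rootStep (T0 : ℕ) (τ : ℕ → ℤ) (x : RootVpre T0 τ) : RootVpre T0 τ :=
  ⟨(x.1.1, x.1.2 + 1), x.2.1, by show τ x.1.1 ≤ x.1.2 + 1; have := x.2.2; omega⟩

/-- The edges of `R_τ`: each `v_i^k` is connected with `v_i^{k+1}`. -/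
def rootAdj (T0 : ℕ) (τ : ℕ → ℤ) (u v : RootV T0 τ) : Prop :=
  (∃ x, u = Quotient.mk (RootSetoid T0 τ) x ∧
        v = Quotient.mk (RootSetoid T0 τ) (rootStep T0 τ x)) ∨
  (∃ x, v = Quotient.mk (RootSetoid T0 τ) x ∧
        u = Quotient.mk (RootSetoid T0 τ) (rootStep T0 τ x))

/-- A vertex of `R_τ` (given `i ≤ T₀` and `τ i ≤ k`). -/
def rootMk (T0 : ℕ) (τ : ℕ → ℤ) (i : ℕ) (k : ℤ) (hi : i ≤ T0) (hk : τ i ≤ k) :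
    RootV T0 τ :=
  Quotient.mk (RootSetoid T0 τ) ⟨(i, k), hi, hk⟩

/-- A local minimum point of a χ-graded graph. -/
def IsLocMin {V : Type} (Adj : V → V → Prop) (χ : V → ℤ) (v : V) : Prop :=
  ∀ w, Adj v w → χ v < χ w

end

noncomputable section GRAux
open Finset

variable (N : ℕ) (τ : ℕ → ℤ)

/-- lexicographic (τ-value, index) strict order -/
def SB (a b : ℕ) : Prop := τ a < τ b ∨ (τ a = τ b ∧ a < b)

instance : DecidablePred (fun p : ℕ × ℕ => SB τ p.1 p.2) := fun p => by
  unfold SB; infer_instance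

instance SBdec (a b : ℕ) : Decidable (SB τ a b) := by unfold SB; infer_instance

/-- lexicographic minimum of a finite set of indices -/
def lexFilter (s : Finset ℕ) (h : s.Nonempty) : Finset ℕ :=
  s.filter (fun j => τ j = s.inf' h τ)

lemma lexFilter_ne (s : Finset ℕ) (h : s.Nonempty) : (lexFilter τ s h).Nonempty := by
  obtain ⟨j, hj, hje⟩ := Finset.exists_mem_eq_inf' h τ
  exact ⟨j, Finset.mem_filter.2 ⟨hj, hje.symm⟩⟩

/-- lexicographic minimum of a finite set of indices -/
def lexMin (s : Finset ℕ) (dflt : ℕ) : ℕ :=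
  if h : s.Nonempty then (lexFilter τ s h).min' (lexFilter_ne τ s h) else dflt

lemma lexMin_mem {s : Finset ℕ} (h : s.Nonempty) (d : ℕ) : lexMin τ s d ∈ s := by
  rw [lexMin, dif_pos h]
  exact (Finset.mem_filter.1 (Finset.min'_mem _ (lexFilter_ne τ s h))).1

lemma lexMin_tau_le {s : Finset ℕ} {j : ℕ} (hj : j ∈ s) (d : ℕ) :
    τ (lexMin τ s d) ≤ τ j := by
  have h : s.Nonempty := ⟨j, hj⟩
  rw [lexMin, dif_pos h]
  have := (Finset.mem_filter.1 (Finset.min'_mem _ (lexFilter_ne τ s h))).2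
  rw [this]
  exact Finset.inf'_le _ hj

lemma lexMin_idx_le {s : Finset ℕ} {j : ℕ} (hj : j ∈ s) (d : ℕ)
    (he : τ j = τ (lexMin τ s d)) : lexMin τ s d ≤ j := by
  have h : s.Nonempty := ⟨j, hj⟩
  have h2 := (Finset.mem_filter.1 (Finset.min'_mem _ (lexFilter_ne τ s h))).2
  rw [lexMin, dif_pos h] at *
  apply Finset.min'_le
  exact Finset.mem_filter.2 ⟨hj, by rw [he]; exact h2⟩

lemma lexMin_sb {s : Finset ℕ} {j : ℕ} (hj : j ∈ s) (d : ℕ)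
    (hne : j ≠ lexMin τ s d) : SB τ (lexMin τ s d) j := by
  have h1 := lexMin_tau_le τ hj d
  rcases lt_or_eq_of_le h1 with h | h
  · exact Or.inl h
  · exact Or.inr ⟨h, by have := lexMin_idx_le τ hj d h.symm; omega⟩

lemma lexMin_indep {s : Finset ℕ} (h : s.Nonempty) (d1 d2 : ℕ) :
    lexMin τ s d1 = lexMin τ s d2 := by
  rw [lexMin, lexMin, dif_pos h, dif_pos h]

/-- connectivity at level `k` -/
def Conn (k : ℤ) (i j : ℕ) : Prop :=
  i ≤ N ∧ j ≤ N ∧ ∀ l ∈ Finset.Icc (min i j) (max i j), τ l ≤ k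

instance Conndec (k : ℤ) (i j : ℕ) : Decidable (Conn N τ k i j) := by
  unfold Conn; infer_instance

lemma conn_self {i : ℕ} {k : ℤ} (hi : i ≤ N) (hk : τ i ≤ k) : Conn N τ k i i := by
  refine ⟨hi, hi, fun l hl => ?_⟩
  simp only [Finset.mem_Icc, min_self, max_self] at hl
  have : l = i := by omega
  rwa [this]

lemma conn_symm {i j : ℕ} {k : ℤ} (h : Conn N τ k i j) : Conn N τ k j i := by
  refine ⟨h.2.1, h.1, fun l hl => h.2.2 l ?_⟩
  simp only [Finset.mem_Icc] at *
  omega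

lemma conn_trans {i j l : ℕ} {k : ℤ} (h1 : Conn N τ k i j) (h2 : Conn N τ k j l) :
    Conn N τ k i l := by
  refine ⟨h1.1, h2.2.1, fun x hx => ?_⟩
  simp only [Finset.mem_Icc] at hx
  have h12 := h1.2.2 x
  have h22 := h2.2.2 x
  simp only [Finset.mem_Icc] at h12 h22
  rcases (by omega : (min i j ≤ x ∧ x ≤ max i j) ∨ (min j l ≤ x ∧ x ≤ max j l)) with h | h
  · exact h12 h
  · exact h22 h

lemma conn_mono {i j : ℕ} {k k' : ℤ} (hk : k ≤ k') (h : Conn N τ k i j) :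
    Conn N τ k' i j :=
  ⟨h.1, h.2.1, fun l hl => le_trans (h.2.2 l hl) hk⟩

lemma conn_tau_left {i j : ℕ} {k : ℤ} (h : Conn N τ k i j) : τ i ≤ k :=
  h.2.2 i (by simp only [Finset.mem_Icc]; omega)

lemma conn_tau_right {i j : ℕ} {k : ℤ} (h : Conn N τ k i j) : τ j ≤ k :=
  h.2.2 j (by simp only [Finset.mem_Icc]; omega)

/-- the component of `i` at level `k` -/
def comp (i : ℕ) (k : ℤ) : Finset ℕ :=
  (Finset.range (N+1)).filter (fun j => Conn N τ k i j)

lemma mem_comp {i j : ℕ} {k : ℤ} : j ∈ comp N τ i k ↔ Conn N τ k i j := by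
  simp only [comp, Finset.mem_filter, Finset.mem_range]
  constructor
  · exact fun h => h.2
  · exact fun h => ⟨by have := h.2.1; omega, h⟩

/-- the eldest vertex of the component of `i` at level `k` -/
def eld (i : ℕ) (k : ℤ) : ℕ := lexMin τ (comp N τ i k) i

lemma comp_nonempty {i : ℕ} {k : ℤ} (hi : i ≤ N) (hk : τ i ≤ k) :
    (comp N τ i k).Nonempty :=
  ⟨i, mem_comp N τ |>.2 (conn_self N τ hi hk)⟩

lemma comp_congr {i j : ℕ} {k : ℤ} (h : Conn N τ k i j) :
    comp N τ i k = comp N τ j k := by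
  ext x
  simp only [mem_comp]
  exact ⟨fun hx => conn_trans N τ (conn_symm N τ h) hx, fun hx => conn_trans N τ h hx⟩

lemma eld_conn {i : ℕ} {k : ℤ} (hi : i ≤ N) (hk : τ i ≤ k) :
    Conn N τ k i (eld N τ i k) :=
  (mem_comp N τ).1 (lexMin_mem τ (comp_nonempty N τ hi hk) i)

lemma eld_le_N {i : ℕ} {k : ℤ} (hi : i ≤ N) (hk : τ i ≤ k) : eld N τ i k ≤ N :=
  (eld_conn N τ hi hk).2.1

lemma tau_eld_le {i : ℕ} {k : ℤ} (hi : i ≤ N) (hk : τ i ≤ k) : τ (eld N τ i k) ≤ k :=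
  conn_tau_right N τ (eld_conn N τ hi hk)

lemma eld_congr {i j : ℕ} {k : ℤ} (h : Conn N τ k i j) :
    eld N τ i k = eld N τ j k := by
  have hne : (comp N τ i k).Nonempty := ⟨j, (mem_comp N τ).2 h⟩
  have hne' : (comp N τ j k).Nonempty := by rw [← comp_congr N τ h]; exact hne
  unfold eld
  rw [comp_congr N τ h]
  exact lexMin_indep τ hne' i j

lemma eld_sb {i j : ℕ} {k : ℤ} (h : Conn N τ k i j) (hne : j ≠ eld N τ i k) :
    SB τ (eld N τ i k) j :=
  lexMin_sb τ ((mem_comp N τ).2 h) i hne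

lemma eld_idem {i : ℕ} {k : ℤ} (hi : i ≤ N) (hk : τ i ≤ k) :
    eld N τ (eld N τ i k) k = eld N τ i k :=
  (eld_congr N τ (eld_conn N τ hi hk)).symm

lemma eld_mono {i : ℕ} {k k' : ℤ} (hi : i ≤ N) (hk : τ i ≤ k) (hkk : k ≤ k') :
    eld N τ i k' = eld N τ (eld N τ i k) k' :=
  eld_congr N τ (conn_mono N τ hkk (eld_conn N τ hi hk))

/-- the maximum of τ -/
def KK : ℤ := (Finset.range (N+1)).sup' ⟨0, by simp⟩ τ

lemma tau_le_KK {i : ℕ} (hi : i ≤ N) : τ i ≤ KK N τ :=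
  Finset.le_sup' τ (Finset.mem_range.2 (by omega))

lemma conn_KK {i j : ℕ} {k : ℤ} (hi : i ≤ N) (hj : j ≤ N) (hk : KK N τ ≤ k) :
    Conn N τ k i j := by
  refine ⟨hi, hj, fun l hl => ?_⟩
  simp only [Finset.mem_Icc] at hl
  exact le_trans (tau_le_KK N τ (by omega)) hk

/-- the global lex-min index, where the infinite `T⁺` tower sits -/
def iz : ℕ := eld N τ 0 (KK N τ)

lemma iz_le_N : iz N τ ≤ N := eld_le_N N τ (by omega) (tau_le_KK N τ (by omega))

lemma tau_iz_le {j : ℕ} (hj : j ≤ N) : τ (iz N τ) ≤ τ j := by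
  have : j ∈ comp N τ 0 (KK N τ) :=
    (mem_comp N τ).2 (conn_KK N τ (by omega) hj le_rfl)
  exact lexMin_tau_le τ this 0

lemma iz_sb {j : ℕ} (hj : j ≤ N) (hne : j ≠ iz N τ) : SB τ (iz N τ) j :=
  lexMin_sb τ ((mem_comp N τ).2 (conn_KK N τ (by omega) hj le_rfl)) 0 hne

lemma sb_asymm {a b : ℕ} (h1 : SB τ a b) (h2 : SB τ b a) : False := by
  rcases h1 with h | h <;> rcases h2 with h' | h' <;> omega

lemma eld_KK {i : ℕ} (hi : i ≤ N) {k : ℤ} (hk : KK N τ ≤ k) : eld N τ i k = iz N τ := by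
  have h1 : eld N τ i k = eld N τ 0 k := eld_congr N τ (conn_KK N τ hi (by omega) hk)
  have h2 : comp N τ 0 k = comp N τ 0 (KK N τ) := by
    ext x
    simp only [mem_comp]
    constructor
    · exact fun hx => conn_KK N τ (by omega) hx.2.1 le_rfl
    · exact fun hx => conn_KK N τ (by omega) hx.2.1 hk
  have hne : (comp N τ 0 (KK N τ)).Nonempty :=
    comp_nonempty N τ (by omega) (tau_le_KK N τ (by omega))
  rw [h1]
  unfold eld iz
  rw [h2]
  rfl

lemma eld_iz {k : ℤ} (hk : τ (iz N τ) ≤ k) : eld N τ (iz N τ) k = iz N τ := by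
  by_contra hne
  have h1 : SB τ (eld N τ (iz N τ) k) (iz N τ) :=
    eld_sb N τ (conn_self N τ (iz_le_N N τ) hk) (fun h => hne h.symm)
  have h2 : SB τ (iz N τ) (eld N τ (iz N τ) k) := by
    apply iz_sb N τ (eld_le_N N τ (iz_le_N N τ) hk)
    intro h
    exact hne (by rw [← h] at h1 ⊢; exact absurd h1 (by rcases h1 with h' | h' <;> omega))
  exact sb_asymm τ h1 h2

/-- existence of the death level -/
lemma death_exists {i : ℕ} (hi : i ≤ N) (hiz : i ≠ iz N τ) :
    ∃ n : ℕ, eld N τ i (τ i + n) ≠ i := by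
  refine ⟨(KK N τ - τ i).toNat, ?_⟩
  have h0 : (0:ℤ) ≤ KK N τ - τ i := by have := tau_le_KK N τ hi; omega
  have h1 : τ i + ((KK N τ - τ i).toNat : ℤ) = KK N τ := by
    rw [Int.toNat_of_nonneg h0]; ring
  rw [h1, eld_KK N τ hi le_rfl]
  exact Ne.symm hiz

/-- the length of the tower based at `i` -/
def len (i : ℕ) : ℕ :=
  if h : i ≤ N ∧ i ≠ iz N τ then Nat.find (death_exists N τ h.1 h.2) else 0

lemma eld_self_of_lt_len {i : ℕ} {h : ℕ} (hh : h < len N τ i) :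
    eld N τ i (τ i + h) = i := by
  by_cases hg : i ≤ N ∧ i ≠ iz N τ
  · rw [len, dif_pos hg] at hh
    have := Nat.find_min (death_exists N τ hg.1 hg.2) hh
    simpa using this
  · rw [len, dif_neg hg] at hh; omega

lemma eld_death {i : ℕ} (hi : i ≤ N) (hiz : i ≠ iz N τ) :
    eld N τ i (τ i + len N τ i) ≠ i := by
  rw [len, dif_pos ⟨hi, hiz⟩]
  exact Nat.find_spec (death_exists N τ hi hiz)

lemma sb_eld_of_ge_death {i : ℕ} (hi : i ≤ N) (hiz : i ≠ iz N τ) {k : ℤ}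
    (hk : τ i + len N τ i ≤ k) : SB τ (eld N τ i k) i := by
  have hτ : τ i ≤ k := by omega
  set c := eld N τ i (τ i + len N τ i) with hc
  have hcne : c ≠ i := eld_death N τ hi hiz
  have hsbc : SB τ c i := eld_sb N τ (conn_self N τ hi (by omega)) (Ne.symm hcne)
  have hconn : Conn N τ k i c := conn_mono N τ hk (eld_conn N τ hi (by omega))
  by_cases hce : c = eld N τ i k
  · rw [← hce]; exact hsbc
  · have h5 : SB τ (eld N τ i k) c := eld_sb N τ hconn hce
    by_cases he : i = eld N τ i k
    · exfalso; rw [← he] at h5; exact sb_asymm τ h5 hsbc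
    · exact eld_sb N τ (conn_self N τ hi hτ) he

lemma eld_self_iff {i : ℕ} (hi : i ≤ N) (hiz : i ≠ iz N τ) {k : ℤ} (hk : τ i ≤ k) :
    eld N τ i k = i ↔ k < τ i + len N τ i := by
  constructor
  · intro h
    by_contra hge
    have := sb_eld_of_ge_death N τ hi hiz (k := k) (by omega)
    rw [h] at this
    exact sb_asymm τ this this
  · intro h
    have h2 : k - τ i = ((k - τ i).toNat : ℤ) := (Int.toNat_of_nonneg (by omega)).symm
    have h3 : (k - τ i).toNat < len N τ i := by omega
    have := eld_self_of_lt_len N τ h3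
    rwa [show τ i + ((k - τ i).toNat : ℤ) = k by omega] at this

/-- the elder vertex absorbing the tower at `i` -/
def edeath (i : ℕ) : ℕ := eld N τ i (τ i + len N τ i)

lemma sb_edeath {i : ℕ} (hi : i ≤ N) (hiz : i ≠ iz N τ) : SB τ (edeath N τ i) i :=
  sb_eld_of_ge_death N τ hi hiz le_rfl

lemma edeath_le_N {i : ℕ} (hi : i ≤ N) (hiz : i ≠ iz N τ) : edeath N τ i ≤ N :=
  eld_le_N N τ hi (by omega)

lemma tau_edeath_le {i : ℕ} (hi : i ≤ N) (hiz : i ≠ iz N τ) : τ (edeath N τ i) ≤ τ i := by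
  rcases sb_edeath N τ hi hiz with h | h <;> omega


lemma sb_trans {a b c : ℕ} (h1 : SB τ a b) (h2 : SB τ b c) : SB τ a c := by
  unfold SB at *; omega

/-- measure: number of indices lex-below `c` -/
def sbCard (c : ℕ) : ℕ := ((Finset.range (N+1)).filter (fun a => SB τ a c)).card

lemma sbCard_lt {a c : ℕ} (ha : a ≤ N) (h : SB τ a c) :
    sbCard N τ a < sbCard N τ c := by
  apply Finset.card_lt_card
  constructor
  · intro x hx
    simp only [Finset.mem_filter] at *
    exact ⟨hx.1, sb_trans τ hx.2 h⟩
  · intro hsub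
    have : a ∈ (Finset.range (N+1)).filter (fun x => SB τ x c) :=
      Finset.mem_filter.2 ⟨Finset.mem_range.2 (by omega), h⟩
    have ha2 := hsub this
    simp only [Finset.mem_filter] at ha2
    exact sb_asymm τ ha2.2 ha2.2

/-- invariant: `c` is the eldest of its component at level `k` -/
def EldInv (c : ℕ) (k : ℤ) : Prop := c ≤ N ∧ τ c ≤ k ∧ eld N τ c k = c

lemma inv_next {c : ℕ} {k : ℤ} (hInv : EldInv N τ c k) (hc : c ≠ iz N τ) :
    EldInv N τ (eld N τ (edeath N τ c) k) k ∧ SB τ (eld N τ (edeath N τ c) k) c := by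
  obtain ⟨hcN, hck, hce⟩ := hInv
  have he1 : edeath N τ c ≤ N := edeath_le_N N τ hcN hc
  have he2 : τ (edeath N τ c) ≤ k := le_trans (tau_edeath_le N τ hcN hc) hck
  have hsb : SB τ (edeath N τ c) c := sb_edeath N τ hcN hc
  refine ⟨⟨eld_le_N N τ he1 he2, tau_eld_le N τ he1 he2, eld_idem N τ he1 he2⟩, ?_⟩
  by_cases hee : edeath N τ c = eld N τ (edeath N τ c) k
  · rw [← hee]; exact hsb
  · exact sb_trans τ (eld_sb N τ (conn_self N τ he1 he2) hee) hsb

/-- sum of the tower contributions along the elder chain -/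
def chainAux (D : ℕ → TPlus) : ℕ → ℕ → ℤ → ℤ
  | 0, _, _ => 0
  | (f+1), c, k =>
    if c = iz N τ then 0 else
      D c ((k - τ c).toNat) + chainAux D f (eld N τ (edeath N τ c) k) k

lemma chainAux_stable (D : ℕ → TPlus) :
    ∀ (f₁ f₂ c : ℕ) (k : ℤ), EldInv N τ c k → sbCard N τ c < f₁ → sbCard N τ c < f₂ →
      chainAux N τ D f₁ c k = chainAux N τ D f₂ c k := by
  intro f₁
  induction f₁ with
  | zero => intro f₂ c k _ h1 _; omega
  | succ f ih =>
    intro f₂ c k hInv h1 h2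
    obtain ⟨f₂', rfl⟩ : ∃ g, f₂ = g + 1 := ⟨f₂ - 1, by omega⟩
    simp only [chainAux]
    by_cases hc : c = iz N τ
    · rw [if_pos hc, if_pos hc]
    · rw [if_neg hc, if_neg hc]
      congr 1
      obtain ⟨hInv', hsb⟩ := inv_next N τ hInv hc
      have hlt := sbCard_lt N τ hInv'.1 hsb
      exact ih f₂' _ k hInv' (by omega) (by omega)

def chainSum (D : ℕ → TPlus) (c : ℕ) (k : ℤ) : ℤ :=
  chainAux N τ D (sbCard N τ c + 1) c k

lemma chainSum_iz (D : ℕ → TPlus) (k : ℤ) : chainSum N τ D (iz N τ) k = 0 := by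
  simp [chainSum, chainAux]

lemma chainSum_unfold (D : ℕ → TPlus) {c : ℕ} {k : ℤ} (hInv : EldInv N τ c k)
    (hc : c ≠ iz N τ) :
    chainSum N τ D c k =
      D c ((k - τ c).toNat) + chainSum N τ D (eld N τ (edeath N τ c) k) k := by
  unfold chainSum
  simp only [chainAux, if_neg hc]
  congr 1
  obtain ⟨hInv', hsb⟩ := inv_next N τ hInv hc
  have hlt := sbCard_lt N τ hInv'.1 hsb
  exact chainAux_stable N τ D (sbCard N τ c) (sbCard N τ (eld N τ (edeath N τ c) k) + 1)
    _ k hInv' (by omega) (by omega)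

lemma chainSum_homog (D : ℕ → TPlus) (d : ℚ)
    (hD : ∀ j, THomog (2 * (τ j : ℚ)) d (D j)) :
    ∀ (f c : ℕ) (k : ℤ), EldInv N τ c k → sbCard N τ c < f →
      chainAux N τ D f c k ≠ 0 → 2 * (k : ℚ) = d := by
  intro f
  induction f with
  | zero => intro c k _ h1 _; omega
  | succ f ih =>
    intro c k hInv h1 hne
    simp only [chainAux] at hne
    by_cases hc : c = iz N τ
    · rw [if_pos hc] at hne; exact absurd rfl hne
    · rw [if_neg hc] at hne
      obtain ⟨hInv', hsb⟩ := inv_next N τ hInv hc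
      have hlt := sbCard_lt N τ hInv'.1 hsb
      by_cases hd : D c ((k - τ c).toNat) = 0
      · rw [hd, zero_add] at hne
        exact ih _ k hInv' (by omega) hne
      · have := hD c _ hd
        have hcast : (((k - τ c).toNat : ℤ) : ℚ) = (k : ℚ) - (τ c : ℚ) := by
          have : ((k - τ c).toNat : ℤ) = k - τ c := Int.toNat_of_nonneg (by
            have := hInv.2.1; omega)
          rw [this]; push_cast; ring
        rw [show ((k - τ c).toNat : ℚ) = (((k - τ c).toNat : ℤ) : ℚ) by push_cast; ring,
          hcast] at this
        linarith

lemma chainSum_homog' (D : ℕ → TPlus) (d : ℚ)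
    (hD : ∀ j, THomog (2 * (τ j : ℚ)) d (D j)) {c : ℕ} {k : ℤ} (hInv : EldInv N τ c k)
    (hne : chainSum N τ D c k ≠ 0) : 2 * (k : ℚ) = d :=
  chainSum_homog N τ D d hD _ c k hInv (by omega) hne


end GRAux


noncomputable section GRMain
open Finset

variable (N : ℕ) (τ : ℕ → ℤ)

/-- evaluation of `φ` at the vertex `v_i^k`, coefficient `0` -/
def Aev (φ : RootV N τ → TPlus) (i : ℕ) (k : ℤ) : ℤ :=
  if h : i ≤ N ∧ τ i ≤ k then φ (rootMk N τ i k h.1 h.2) 0 else 0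

lemma Aev_mk (φ : RootV N τ → TPlus) {i : ℕ} {k : ℤ} (hi : i ≤ N) (hk : τ i ≤ k) :
    Aev N τ φ i k = φ (rootMk N τ i k hi hk) 0 := by
  rw [Aev, dif_pos ⟨hi, hk⟩]

lemma Aev_add (φ ψ : RootV N τ → TPlus) (i : ℕ) (k : ℤ) :
    Aev N τ (φ + ψ) i k = Aev N τ φ i k + Aev N τ ψ i k := by
  unfold Aev
  split
  · simp [Pi.add_apply, Finsupp.add_apply]
  · simp

lemma Aev_smul (c : ℤ) (φ : RootV N τ → TPlus) (i : ℕ) (k : ℤ) :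
    Aev N τ (c • φ) i k = c * Aev N τ φ i k := by
  unfold Aev
  split
  · simp [Pi.smul_apply, Finsupp.smul_apply]
  · simp

lemma rootMk_congr {i j : ℕ} {k : ℤ} (hi : i ≤ N) (hk : τ i ≤ k) (hj : j ≤ N)
    (hk' : τ j ≤ k) (h : Conn N τ k i j) :
    rootMk N τ i k hi hk = rootMk N τ j k hj hk' := by
  apply Quotient.sound
  refine ⟨rfl, fun l hl => h.2.2 l (Finset.mem_Icc.2 ?_)⟩
  have hl' : (i ≤ l ∧ l ≤ j) ∨ (j ≤ l ∧ l ≤ i) := hl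
  omega

lemma Aev_conn (φ : RootV N τ → TPlus) {i j : ℕ} {k : ℤ} (h : Conn N τ k i j) :
    Aev N τ φ i k = Aev N τ φ j k := by
  rw [Aev_mk N τ φ h.1 (conn_tau_left N τ h), Aev_mk N τ φ h.2.1 (conn_tau_right N τ h),
    rootMk_congr N τ h.1 (conn_tau_left N τ h) h.2.1 (conn_tau_right N τ h) h]

lemma phi_step {φ : RootV N τ → TPlus} (hφ : φ ∈ Hmod (rootAdj N τ) (rootχ N τ))
    (x : RootVpre N τ) :
    shiftU (φ (Quotient.mk (RootSetoid N τ) x)) =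
      φ (Quotient.mk (RootSetoid N τ) (rootStep N τ x)) := by
  apply hφ
  · exact Or.inl ⟨x, rfl, rfl⟩
  · show x.1.2 < x.1.2 + 1
    omega

lemma phi_apply {φ : RootV N τ → TPlus} (hφ : φ ∈ Hmod (rootAdj N τ) (rootχ N τ)) :
    ∀ (h : ℕ) (i : ℕ) (k : ℤ) (hi : i ≤ N) (hk : τ i ≤ k),
      φ (rootMk N τ i k hi hk) h = Aev N τ φ i (k + h) := by
  intro h
  induction h with
  | zero =>
    intro i k hi hk
    rw [Aev]
    simp only [Nat.cast_zero, add_zero]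
    rw [dif_pos ⟨hi, hk⟩]
  | succ h ih =>
    intro i k hi hk
    have hstep := phi_step N τ hφ ⟨(i, k), hi, hk⟩
    have h1 : φ (rootMk N τ i k hi hk) (h+1) = φ (rootMk N τ i (k+1) hi (by omega)) h := by
      show φ (rootMk N τ i k hi hk) (h+1) =
        φ (Quotient.mk (RootSetoid N τ) (rootStep N τ ⟨(i, k), hi, hk⟩)) h
      rw [← hstep]
      rfl
    rw [h1, ih i (k+1) hi (by omega)]
    congr 1
    push_cast
    ring

/-- the tower part of the forward map -/
def phiT (φ : RootV N τ → TPlus) (i : ℕ) : TPlus :=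
  Finsupp.onFinset (Finset.range (len N τ i))
    (fun h => if h < len N τ i then
        Aev N τ φ i (τ i + h) - Aev N τ φ (eld N τ (edeath N τ i) (τ i + h)) (τ i + h)
      else 0)
    (by
      intro h hne
      rw [Finset.mem_range]
      by_contra hge
      exact hne (if_neg (by omega)))

lemma phiT_apply (φ : RootV N τ → TPlus) (i : ℕ) (h : ℕ) :
    phiT N τ φ i h = if h < len N τ i then
        Aev N τ φ i (τ i + h) - Aev N τ φ (eld N τ (edeath N τ i) (τ i + h)) (τ i + h)
      else 0 := rfl

lemma phiT_mem (φ : RootV N τ → TPlus) (i : ℕ) : phiT N τ φ i ∈ Tower (len N τ i) := by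
  intro h hh
  rw [phiT_apply, if_neg (by omega)]

def lenF : Fin (N+1) → ℕ := fun i => len N τ i.val

/-- the forward map -/
def PhiL : Hmod (rootAdj N τ) (rootχ N τ) →ₗ[ℤ] Targ (lenF N τ) where
  toFun φ :=
    (φ.1 (rootMk N τ (iz N τ) (τ (iz N τ)) (iz_le_N N τ) le_rfl),
     fun i => ⟨phiT N τ φ.1 i.val, phiT_mem N τ φ.1 i.val⟩)
  map_add' φ ψ := by
    refine Prod.ext ?_ ?_
    · simp [Submodule.coe_add, Pi.add_apply]
    · funext i
      apply Subtype.ext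
      show phiT N τ (φ.1 + ψ.1) i.val = phiT N τ φ.1 i.val + phiT N τ ψ.1 i.val
      ext h
      simp only [phiT_apply, Finsupp.add_apply, Aev_add]
      split <;> ring
  map_smul' c φ := by
    refine Prod.ext ?_ ?_
    · simp [Submodule.coe_smul, Pi.smul_apply]
    · funext i
      apply Subtype.ext
      show phiT N τ (c • φ.1) i.val = c • phiT N τ φ.1 i.val
      ext h
      simp only [phiT_apply, Finsupp.smul_apply, Aev_smul, smul_eq_mul]
      split <;> ring

end GRMain


noncomputable section GRPsi
open Finset

variable (N : ℕ) (τ : ℕ → ℤ) (P : TPlus) (DT : ∀ i : Fin (N+1), Tower (lenF N τ i))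

/-- tower data as a total function -/
def Df : ℕ → TPlus := fun j => if h : j ≤ N then (DT ⟨j, by omega⟩ : TPlus) else 0

lemma P_big {n : ℕ} (hn : P.support.sup id < n) : P n = 0 := by
  by_contra hne
  have : n ∈ P.support := Finsupp.mem_support_iff.2 hne
  have := Finset.le_sup (f := id) this
  simp only [id] at this
  omega

/-- the value of the inverse map at vertex `v_i^k` -/
def psiv (i : ℕ) (k : ℤ) : ℤ :=
  if h : i ≤ N ∧ τ i ≤ k then
    P ((k - τ (iz N τ)).toNat) + chainSum N τ (Df N τ DT) (eld N τ i k) k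
  else 0

lemma psiv_vanish (i : ℕ) {k : ℤ} (hk : KK N τ < k)
    (hP : P.support.sup id + KK N τ < k) : psiv N τ P DT i k = 0 := by
  unfold psiv
  split
  · next hg =>
    rw [eld_KK N τ hg.1 (by omega), chainSum_iz, add_zero]
    apply P_big P
    have hKm : τ (iz N τ) ≤ KK N τ := tau_le_KK N τ (iz_le_N N τ)
    have h2 : (0:ℤ) ≤ k - τ (iz N τ) := by omega
    have h3 : ((k - τ (iz N τ)).toNat : ℤ) = k - τ (iz N τ) := Int.toNat_of_nonneg h2
    omega
  · rfl

/-- bound for the support -/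
def psiB (k : ℤ) : ℕ := (KK N τ - k).toNat + P.support.sup id + 1

lemma psiv_vanish' (i : ℕ) (k : ℤ) {h : ℕ} (hh : psiB N τ P k ≤ h) :
    psiv N τ P DT i (k + h) = 0 := by
  have hB : psiB N τ P k = (KK N τ - k).toNat + P.support.sup id + 1 := rfl
  have h1 : KK N τ - k ≤ ((KK N τ - k).toNat : ℤ) := Int.self_le_toNat _
  apply psiv_vanish N τ P DT <;> omega

def psifun (x : RootVpre N τ) : TPlus :=
  Finsupp.onFinset (Finset.range (psiB N τ P x.1.2))
    (fun h => psiv N τ P DT x.1.1 (x.1.2 + h))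
    (by
      intro h hne
      rw [Finset.mem_range]
      by_contra hge
      exact hne (psiv_vanish' N τ P DT x.1.1 x.1.2 (by omega)))

lemma psifun_apply (x : RootVpre N τ) (h : ℕ) :
    psifun N τ P DT x h = psiv N τ P DT x.1.1 (x.1.2 + h) := rfl

def psiq : RootV N τ → TPlus :=
  Quotient.lift (psifun N τ P DT) (by
    intro x y hxy
    ext h
    rw [psifun_apply, psifun_apply]
    have hk : x.1.2 = y.1.2 := hxy.1
    have hrel : ∀ l : ℕ, ((x.1.1 ≤ l ∧ l ≤ y.1.1) ∨ (y.1.1 ≤ l ∧ l ≤ x.1.1)) →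
        τ l ≤ x.1.2 := hxy.2
    have hconn : Conn N τ (x.1.2 + h) x.1.1 y.1.1 := by
      refine ⟨x.2.1, y.2.1, fun l hl => ?_⟩
      rw [Finset.mem_Icc] at hl
      have := hrel l (by omega)
      omega
    rw [← hk]
    unfold psiv
    rw [dif_pos ⟨x.2.1, by have := x.2.2; omega⟩, dif_pos ⟨y.2.1, by
      have := y.2.2; rw [← hk] at *; omega⟩]
    rw [eld_congr N τ hconn])

lemma psiq_mk (x : RootVpre N τ) :
    psiq N τ P DT (Quotient.mk (RootSetoid N τ) x) = psifun N τ P DT x := rfl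

lemma psiq_mem : psiq N τ P DT ∈ Hmod (rootAdj N τ) (rootχ N τ) := by
  intro v w hadj hlt
  rcases hadj with ⟨x, rfl, rfl⟩ | ⟨x, rfl, rfl⟩
  · ext h
    rw [shiftU_apply, psiq_mk, psiq_mk, psifun_apply, psifun_apply]
    show psiv N τ P DT x.1.1 (x.1.2 + ((h:ℤ) + 1)) = psiv N τ P DT x.1.1 ((x.1.2 + 1) + h)
    congr 1
    ring
  · exfalso
    have : x.1.2 + 1 < x.1.2 := hlt
    omega

lemma Aev_psiq (i : ℕ) (k : ℤ) : Aev N τ (psiq N τ P DT) i k = psiv N τ P DT i k := by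
  unfold Aev psiv
  by_cases hg : i ≤ N ∧ τ i ≤ k
  · rw [dif_pos hg, dif_pos hg]
    show psifun N τ P DT (⟨(i, k), hg.1, hg.2⟩ : RootVpre N τ) 0 = _
    show psiv N τ P DT i (k + ((0:ℕ):ℤ)) = _
    rw [Nat.cast_zero, add_zero]
    unfold psiv
    rw [dif_pos hg]
  · rw [dif_neg hg, dif_neg hg]

lemma len_iz : len N τ (iz N τ) = 0 := by
  rw [len, dif_neg]
  simp

/-- the key computation: `Φ ∘ Ψ = id` -/
lemma Phi_Psi : PhiL N τ ⟨psiq N τ P DT, psiq_mem N τ P DT⟩ = (P, DT) := by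
  refine Prod.ext ?_ ?_
  · show psiq N τ P DT (rootMk N τ (iz N τ) (τ (iz N τ)) (iz_le_N N τ) le_rfl) = P
    ext h
    rw [show rootMk N τ (iz N τ) (τ (iz N τ)) (iz_le_N N τ) le_rfl =
      Quotient.mk (RootSetoid N τ) (⟨(iz N τ, τ (iz N τ)), iz_le_N N τ, le_rfl⟩ : RootVpre N τ) from rfl]
    show psiv N τ P DT (iz N τ) (τ (iz N τ) + h) = P h
    unfold psiv
    rw [dif_pos ⟨iz_le_N N τ, by omega⟩]
    rw [eld_iz N τ (by omega), chainSum_iz, add_zero]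
    congr 1
    omega
  · funext i
    apply Subtype.ext
    show phiT N τ (psiq N τ P DT) i.val = (DT i : TPlus)
    ext h
    rw [phiT_apply]
    by_cases hlt : h < len N τ i.val
    · rw [if_pos hlt]
      set k : ℤ := τ i.val + h with hk
      have hiN : i.val ≤ N := by omega
      have hτk : τ i.val ≤ k := by omega
      have hiz : i.val ≠ iz N τ := by
        intro he
        rw [he, len_iz] at hlt
        omega
      have hE : eld N τ i.val k = i := eld_self_of_lt_len N τ hlt
      have hInv : EldInv N τ i.val k := ⟨hiN, hτk, hE⟩
      have hed1 : edeath N τ i.val ≤ N := edeath_le_N N τ hiN hiz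
      have hed2 : τ (edeath N τ i.val) ≤ k := le_trans (tau_edeath_le N τ hiN hiz) hτk
      set g := eld N τ (edeath N τ i.val) k with hg
      have hgN : g ≤ N := eld_le_N N τ hed1 hed2
      have hgτ : τ g ≤ k := tau_eld_le N τ hed1 hed2
      have hgE : eld N τ g k = g := eld_idem N τ hed1 hed2
      rw [Aev_psiq, Aev_psiq]
      unfold psiv
      rw [dif_pos ⟨hiN, hτk⟩, dif_pos ⟨hgN, hgτ⟩, hE, hgE]
      rw [chainSum_unfold N τ (Df N τ DT) hInv hiz]
      have hDf : Df N τ DT i.val = (DT i : TPlus) := by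
        rw [Df, dif_pos hiN]
      have htn : (k - τ i.val).toNat = h := by omega
      rw [hDf, htn]
      ring
    · rw [if_neg hlt]
      have hlen : lenF N τ i ≤ h := by unfold lenF; omega
      exact ((DT i).2 h hlen).symm

end GRPsi


noncomputable section GRInj
open Finset

variable (N : ℕ) (τ : ℕ → ℤ)

lemma eldInv_eld {i : ℕ} {k : ℤ} (hi : i ≤ N) (hk : τ i ≤ k) :
    EldInv N τ (eld N τ i k) k :=
  ⟨eld_le_N N τ hi hk, tau_eld_le N τ hi hk, eld_idem N τ hi hk⟩

lemma PhiL_inj : ∀ φ, PhiL N τ φ = 0 → φ = 0 := by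
  intro φ hz
  have h0 : φ.1 (rootMk N τ (iz N τ) (τ (iz N τ)) (iz_le_N N τ) le_rfl) = 0 :=
    congrArg Prod.fst hz
  have hT : ∀ (i : Fin (N+1)) (h : ℕ), phiT N τ φ.1 i.val h = 0 := by
    intro i h
    have := congrArg (fun y : Targ (lenF N τ) => ((y.2 i : TPlus) h)) hz
    have h' : ((PhiL N τ φ).2 i : TPlus) h = 0 := by simpa using this
    exact h'
  have base : ∀ k : ℤ, τ (iz N τ) ≤ k → Aev N τ φ.1 (iz N τ) k = 0 := by
    intro k hk
    have h1 := phi_apply N τ φ.2 (k - τ (iz N τ)).toNat (iz N τ) (τ (iz N τ))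
      (iz_le_N N τ) le_rfl
    have h2 : τ (iz N τ) + (((k - τ (iz N τ)).toNat : ℕ) : ℤ) = k := by omega
    rw [h0, h2] at h1
    simpa using h1.symm
  have main : ∀ (f c : ℕ) (k : ℤ), EldInv N τ c k → sbCard N τ c < f →
      Aev N τ φ.1 c k = 0 := by
    intro f
    induction f with
    | zero => intro c k _ h; omega
    | succ f ih =>
      intro c k hInv hf
      by_cases hc : c = iz N τ
      · subst hc; exact base k hInv.2.1
      · obtain ⟨hcN, hck, hce⟩ := hInv
        have hklt : k < τ c + len N τ c := (eld_self_iff N τ hcN hc hck).1 hce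
        have hh : ((k - τ c).toNat) < len N τ c := by omega
        have hkeq : τ c + (((k - τ c).toNat : ℕ) : ℤ) = k := by omega
        have htz := hT ⟨c, by omega⟩ (k - τ c).toNat
        rw [phiT_apply] at htz
        simp only at htz
        rw [if_pos hh, hkeq] at htz
        obtain ⟨hInv', hsb⟩ := inv_next N τ ⟨hcN, hck, hce⟩ hc
        have hlt := sbCard_lt N τ hInv'.1 hsb
        have hnext := ih _ k hInv' (by omega)
        omega
  apply Subtype.ext
  funext v
  obtain ⟨x, rfl⟩ := Quotient.exists_rep v
  ext h
  have h1 : φ.1 (Quotient.mk (RootSetoid N τ) x) h = Aev N τ φ.1 x.1.1 (x.1.2 + h) :=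
    phi_apply N τ φ.2 h x.1.1 x.1.2 x.2.1 x.2.2
  have hτ : τ x.1.1 ≤ x.1.2 + h := by have := x.2.2; omega
  have hC := Aev_conn N τ φ.1 (eld_conn N τ x.2.1 hτ)
  have hm := main (sbCard N τ (eld N τ x.1.1 (x.1.2 + h)) + 1) _ (x.1.2 + h)
    (eldInv_eld N τ x.2.1 hτ) (by omega)
  rw [h1, hC, hm]
  simp
  rfl

lemma Aev_HU (φ : Hmod (rootAdj N τ) (rootχ N τ)) {i : ℕ} {k : ℤ}
    (hi : i ≤ N) (hk : τ i ≤ k) :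
    Aev N τ (HU (rootAdj N τ) (rootχ N τ) φ).1 i k = Aev N τ φ.1 i (k+1) := by
  rw [Aev_mk N τ _ hi hk, Aev_mk N τ _ hi (by omega : τ i ≤ k + 1)]
  show shiftU (φ.1 (rootMk N τ i k hi hk)) 0 = _
  rw [shiftU_apply]
  have e1 := phi_apply N τ φ.2 1 i k hi hk
  have e2 := phi_apply N τ φ.2 0 i (k+1) hi (by omega)
  simp only [Nat.cast_one, Nat.cast_zero, add_zero] at e1 e2
  rw [show (0:ℕ)+1 = 1 from rfl, e1, ← e2]

lemma PhiL_HU (φ : Hmod (rootAdj N τ) (rootχ N τ)) :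
    PhiL N τ (HU (rootAdj N τ) (rootχ N τ) φ) = TargU (lenF N τ) (PhiL N τ φ) := by
  refine Prod.ext rfl ?_
  funext i
  apply Subtype.ext
  ext h
  show phiT N τ (HU (rootAdj N τ) (rootχ N τ) φ).1 i.val h
    = shiftU (phiT N τ φ.1 i.val) h
  rw [shiftU_apply, phiT_apply, phiT_apply]
  by_cases h1 : h < len N τ i.val
  · rw [if_pos h1]
    set k : ℤ := τ i.val + (h:ℤ) with hkdef
    have hiN : i.val ≤ N := by omega
    have hτk : τ i.val ≤ k := by omega
    have hiz : i.val ≠ iz N τ := by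
      intro he
      rw [he, len_iz] at h1
      omega
    have hed1 : edeath N τ i.val ≤ N := edeath_le_N N τ hiN hiz
    have hed2 : τ (edeath N τ i.val) ≤ k := le_trans (tau_edeath_le N τ hiN hiz) hτk
    have hg1 : eld N τ (edeath N τ i.val) k ≤ N := eld_le_N N τ hed1 hed2
    have hg2 : τ (eld N τ (edeath N τ i.val) k) ≤ k := tau_eld_le N τ hed1 hed2
    rw [Aev_HU N τ φ hiN hτk, Aev_HU N τ φ hg1 hg2]
    by_cases h2 : h + 1 < len N τ i.val
    · rw [if_pos h2]
      have harg : τ i.val + (((h+1 : ℕ)) : ℤ) = k + 1 := by push_cast; ring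
      rw [harg]
      have hc1 : Conn N τ (k+1) (edeath N τ i.val) (eld N τ (edeath N τ i.val) k) :=
        conn_mono N τ (by omega) (eld_conn N τ hed1 hed2)
      have hc2 : Conn N τ (k+1) (edeath N τ i.val) (eld N τ (edeath N τ i.val) (k+1)) :=
        eld_conn N τ hed1 (by omega)
      have := Aev_conn N τ φ.1 (conn_trans N τ (conn_symm N τ hc1) hc2)
      rw [this]
    · rw [if_neg h2]
      have hlen : k + 1 = τ i.val + len N τ i.val := by
        have : h + 1 = len N τ i.val := by omega
        omega
      have hc0 : Conn N τ (k+1) i.val (edeath N τ i.val) := by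
        have := eld_conn N τ hiN (show τ i.val ≤ τ i.val + len N τ i.val by omega)
        rw [← hlen] at this
        rw [edeath, ← hlen]
        exact this
      have hc1 : Conn N τ (k+1) (edeath N τ i.val) (eld N τ (edeath N τ i.val) k) :=
        conn_mono N τ (by omega) (eld_conn N τ hed1 hed2)
      have := Aev_conn N τ φ.1 (conn_trans N τ hc0 hc1)
      rw [this]
      ring
  · rw [if_neg h1, if_neg (by omega)]

end GRInj


noncomputable section GRHomog
open Finset

variable (N : ℕ) (τ : ℕ → ℤ)

def rIF : Fin (N+1) → ℚ := fun i => 2 * (τ i.val : ℚ)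

lemma Aev_homog {d : ℚ} {φ : Hmod (rootAdj N τ) (rootχ N τ)}
    (hH : HHomog (rootχ N τ) 0 d φ.1) {c : ℕ} {k : ℤ}
    (hne : Aev N τ φ.1 c k ≠ 0) : 2 * (k : ℚ) = d := by
  unfold Aev at hne
  split at hne
  · next hg =>
    have h1 := hH (rootMk N τ c k hg.1 hg.2) 0 hne
    have hχ : rootχ N τ (rootMk N τ c k hg.1 hg.2) = k := rfl
    rw [hχ] at h1
    push_cast at h1
    linarith
  · exact absurd rfl hne

lemma homog_fwd (d : ℚ) (φ : Hmod (rootAdj N τ) (rootχ N τ))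
    (hH : HHomog (rootχ N τ) 0 d φ.1) :
    TargHomog (2 * (τ (iz N τ) : ℚ)) (rIF N τ) d (PhiL N τ φ) := by
  constructor
  · intro h hne
    have h1 := hH (rootMk N τ (iz N τ) (τ (iz N τ)) (iz_le_N N τ) le_rfl) h hne
    have hχ : rootχ N τ (rootMk N τ (iz N τ) (τ (iz N τ)) (iz_le_N N τ) le_rfl)
      = τ (iz N τ) := rfl
    rw [hχ] at h1
    linarith
  · intro i h hne
    have hne' : phiT N τ φ.1 i.val h ≠ 0 := hne
    rw [phiT_apply] at hne'
    by_cases hlt : h < len N τ i.val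
    · rw [if_pos hlt] at hne'
      have hor : Aev N τ φ.1 i.val (τ i.val + h) ≠ 0 ∨
          Aev N τ φ.1 (eld N τ (edeath N τ i.val) (τ i.val + h)) (τ i.val + h) ≠ 0 := by
        by_contra hc
        push_neg at hc
        rw [hc.1, hc.2] at hne'
        exact hne' (by ring)
      have h2 : 2 * ((τ i.val + (h:ℤ) : ℤ) : ℚ) = d := by
        rcases hor with hA | hA
        · exact Aev_homog N τ hH hA
        · exact Aev_homog N τ hH hA
      show 2 * (h:ℚ) + (2 * (τ i.val : ℚ)) = d
      push_cast at h2
      linarith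
    · rw [if_neg hlt] at hne'
      exact absurd rfl hne'

lemma homog_bwd (d : ℚ) (φ : Hmod (rootAdj N τ) (rootχ N τ))
    (hT : TargHomog (2 * (τ (iz N τ) : ℚ)) (rIF N τ) d (PhiL N τ φ)) :
    HHomog (rootχ N τ) 0 d φ.1 := by
  set x := PhiL N τ φ with hx
  have hψm := psiq_mem N τ x.1 x.2
  have heq : φ = ⟨psiq N τ x.1 x.2, hψm⟩ := by
    have h2 : PhiL N τ ⟨psiq N τ x.1 x.2, hψm⟩ = x := Phi_Psi N τ x.1 x.2
    have h3 : PhiL N τ (φ - ⟨psiq N τ x.1 x.2, hψm⟩) = 0 := by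
      rw [map_sub, h2, ← hx, sub_self]
    exact sub_eq_zero.1 (PhiL_inj N τ _ h3)
  intro v
  obtain ⟨y, rfl⟩ := Quotient.exists_rep v
  intro h hne
  rw [heq] at hne
  have hval : (⟨psiq N τ x.1 x.2, hψm⟩ : Hmod (rootAdj N τ) (rootχ N τ)).1
      (Quotient.mk (RootSetoid N τ) y) h = psiv N τ x.1 x.2 y.1.1 (y.1.2 + h) := rfl
  rw [hval] at hne
  unfold psiv at hne
  split at hne
  · next hg =>
    set k' : ℤ := y.1.2 + (h:ℤ) with hk'
    have h2k : 2 * (k' : ℚ) = d := by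
      by_cases hp : x.1 ((k' - τ (iz N τ)).toNat) = 0
      · rw [hp, zero_add] at hne
        have hD : ∀ j, THomog (2 * (τ j : ℚ)) d (Df N τ x.2 j) := by
          intro j
          unfold Df
          split
          · next hj => exact hT.2 ⟨j, by omega⟩
          · intro hh hnz
            simp at hnz
        exact chainSum_homog' N τ _ d hD (eldInv_eld N τ hg.1 hg.2) hne
      · have h1 := hT.1 _ hp
        have hmle : τ (iz N τ) ≤ k' := le_trans (tau_iz_le N τ hg.1) hg.2
        have htn : (((k' - τ (iz N τ)).toNat : ℤ)) = k' - τ (iz N τ) :=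
          Int.toNat_of_nonneg (by omega)
        have hcast : ((k' - τ (iz N τ)).toNat : ℚ) = (k' : ℚ) - (τ (iz N τ) : ℚ) := by
          rw [show ((k' - τ (iz N τ)).toNat : ℚ)
            = (((k' - τ (iz N τ)).toNat : ℤ) : ℚ) by push_cast; ring, htn]
          push_cast
          ring
        rw [hcast] at h1
        linarith
    have hχ : rootχ N τ (Quotient.mk (RootSetoid N τ) y) = y.1.2 := rfl
    rw [hχ]
    rw [hk'] at h2k
    push_cast at h2k ⊢
    linarith
  · exact absurd rfl hne

end GRHomog


noncomputable section GRCount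
open Finset

variable (N : ℕ) (τ : ℕ → ℤ)

lemma len_le_KK {i : ℕ} (hi : i ≤ N) : τ i + (len N τ i : ℤ) ≤ KK N τ := by
  by_cases hiz : i = iz N τ
  · subst hiz
    rw [len_iz]
    simpa using tau_le_KK N τ hi
  · by_contra hgt
    push_neg at hgt
    have h1 : eld N τ i (KK N τ) = iz N τ := eld_KK N τ hi le_rfl
    have h2 : eld N τ i (KK N τ) = i :=
      (eld_self_iff N τ hi hiz (tau_le_KK N τ hi)).2 (by omega)
    exact hiz (by rw [← h2, h1])

open Classical in
/-- total function: the left endpoint of the component of `i` at level `k` -/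
def lamp (k : ℤ) (i : ℕ) : ℕ :=
  if h : ∃ l, Conn N τ k l i then Nat.find h else i

lemma lam_spec {k : ℤ} {i : ℕ} (hi : i ≤ N) (hk : τ i ≤ k) :
    Conn N τ k (lamp N τ k i) i ∧ ∀ l < lamp N τ k i, ¬ Conn N τ k l i := by
  have hex : ∃ l, Conn N τ k l i := ⟨i, conn_self N τ hi hk⟩
  classical
  rw [lamp, dif_pos hex]
  exact ⟨Nat.find_spec hex, fun l hl => Nat.find_min hex hl⟩

lemma lam_lep {k : ℤ} {i : ℕ} (hi : i ≤ N) (hk : τ i ≤ k) :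
    τ (lamp N τ k i) ≤ k ∧ (lamp N τ k i = 0 ∨ k < τ (lamp N τ k i - 1)) := by
  obtain ⟨hc, hmin⟩ := lam_spec N τ hi hk
  refine ⟨conn_tau_left N τ hc, ?_⟩
  by_cases h0 : lamp N τ k i = 0
  · exact Or.inl h0
  · right
    by_contra hτ'
    push_neg at hτ'
    set l := lamp N τ k i with hl
    have hlN : l ≤ N := hc.1
    have hadj : Conn N τ k (l-1) l := by
      refine ⟨by omega, hlN, fun x hx => ?_⟩
      rw [Finset.mem_Icc] at hx
      rcases (by omega : x = l - 1 ∨ x = l) with rfl | rfl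
      · exact hτ'
      · exact conn_tau_left N τ hc
    exact hmin (l-1) (by omega) (conn_trans N τ hadj hc)

lemma lam_eld {k : ℤ} {l : ℕ} (hl : l ≤ N) (hτl : τ l ≤ k)
    (hlep : l = 0 ∨ k < τ (l-1)) : lamp N τ k (eld N τ l k) = l := by
  have h1 : eld N τ l k ≤ N := eld_le_N N τ hl hτl
  have h2 : τ (eld N τ l k) ≤ k := tau_eld_le N τ hl hτl
  obtain ⟨hc, hmin⟩ := lam_spec N τ h1 h2
  have hle : lamp N τ k (eld N τ l k) ≤ l := by
    by_contra hgt
    exact hmin l (by omega) (eld_conn N τ hl hτl)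
  rcases lt_or_eq_of_le hle with hlt | heq
  · exfalso
    have hc2 : Conn N τ k (lamp N τ k (eld N τ l k)) l :=
      conn_trans N τ hc (conn_symm N τ (eld_conn N τ hl hτl))
    have hτl1 : τ (l-1) ≤ k := hc2.2.2 (l-1) (Finset.mem_Icc.2 (by omega))
    rcases hlep with rfl | hlep
    · omega
    · omega
  · exact heq

lemma comp_card_eq_lep (k : ℤ) :
    ((Finset.range (N+1)).filter (fun i => τ i ≤ k ∧ eld N τ i k = i)).card
    = ((Finset.range (N+1)).filter (fun i => τ i ≤ k ∧ (i = 0 ∨ k < τ (i-1)))).card := by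
  apply Finset.card_bij (fun i _ => lamp N τ k i)
  · intro a ha
    simp only [Finset.mem_filter, Finset.mem_range] at ha ⊢
    obtain ⟨haN, hτa, _⟩ := ha
    have h1 := lam_lep N τ (show a ≤ N by omega) hτa
    have h2 : lamp N τ k a ≤ N := (lam_spec N τ (show a ≤ N by omega) hτa).1.1
    exact ⟨by omega, h1.1, h1.2⟩
  · intro a ha b hb heq
    simp only [Finset.mem_filter, Finset.mem_range] at ha hb
    have hca := (lam_spec N τ (show a ≤ N by omega) ha.2.1).1
    have hcb := (lam_spec N τ (show b ≤ N by omega) hb.2.1).1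
    rw [heq] at hca
    have hab : Conn N τ k a b := conn_trans N τ (conn_symm N τ hca) hcb
    have h3 := eld_congr N τ hab
    rw [ha.2.2, hb.2.2] at h3
    exact h3
  · intro b hb
    simp only [Finset.mem_filter, Finset.mem_range] at hb
    refine ⟨eld N τ b k, ?_, ?_⟩
    · simp only [Finset.mem_filter, Finset.mem_range]
      exact ⟨by have := eld_le_N N τ (show b ≤ N by omega) hb.2.1; omega,
        tau_eld_le N τ (show b ≤ N by omega) hb.2.1,
        eld_idem N τ (show b ≤ N by omega) hb.2.1⟩
    · exact lam_eld N τ (show b ≤ N by omega) hb.2.1 hb.2.2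

lemma sum_len (hτ0 : τ 0 = 0) :
    (∑ i ∈ Finset.range (N+1), (len N τ i : ℤ))
      = τ (iz N τ) + ∑ i ∈ Finset.range N, max (τ i - τ (i + 1)) 0 := by
  set m := τ (iz N τ) with hm
  set K := KK N τ with hK
  have hm0 : m ≤ 0 := by have := tau_iz_le N τ (show 0 ≤ N by omega); omega
  have hK0 : 0 ≤ K := by have := tau_le_KK N τ (show 0 ≤ N by omega); omega
  have hmτ : ∀ i, i ≤ N → m ≤ τ i := fun i hi => tau_iz_le N τ hi
  have hτK : ∀ i, i ≤ N → τ i ≤ K := fun i hi => tau_le_KK N τ hi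
  -- step 1: per index, length as a sum of indicators over levels
  have step1 : ∀ i ∈ Finset.range (N+1), (len N τ i : ℤ)
      = ∑ k ∈ Finset.Ico m K,
          (if τ i ≤ k ∧ eld N τ i k = i ∧ i ≠ iz N τ then (1:ℤ) else 0) := by
    intro i hi
    rw [Finset.mem_range] at hi
    by_cases hiz : i = iz N τ
    · subst hiz
      rw [len_iz, Finset.sum_eq_zero]
      · simp
      · intro k _
        rw [if_neg (by tauto)]
    · have hcond : ∀ k ∈ Finset.Ico m K,
          (if τ i ≤ k ∧ eld N τ i k = i ∧ i ≠ iz N τ then (1:ℤ) else 0)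
          = (if k ∈ Finset.Ico (τ i) (τ i + (len N τ i : ℤ)) then (1:ℤ) else 0) := by
        intro k _
        by_cases hc : τ i ≤ k ∧ k < τ i + (len N τ i : ℤ)
        · rw [if_pos ⟨hc.1, (eld_self_iff N τ (by omega) hiz hc.1).2 hc.2, hiz⟩,
            if_pos (Finset.mem_Ico.2 hc)]
        · rw [if_neg, if_neg (fun hmem => hc (Finset.mem_Ico.1 hmem))]
          intro hca
          exact hc ⟨hca.1, (eld_self_iff N τ (by omega) hiz hca.1).1 hca.2.1⟩
      rw [Finset.sum_congr rfl hcond, Finset.sum_ite_mem]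
      have hsub : Finset.Ico m K ∩ Finset.Ico (τ i) (τ i + (len N τ i : ℤ))
          = Finset.Ico (τ i) (τ i + (len N τ i : ℤ)) := by
        rw [Finset.inter_eq_right]
        apply Finset.Ico_subset_Ico
        · exact hmτ i (by omega)
        · exact len_le_KK N τ (by omega)
      rw [hsub, Finset.sum_const, Int.card_Ico, nsmul_eq_mul, mul_one]
      omega
  -- step 2 : per level
  have step2 : ∀ k ∈ Finset.Ico m K,
      (∑ i ∈ Finset.range (N+1),
        (if τ i ≤ k ∧ eld N τ i k = i ∧ i ≠ iz N τ then (1:ℤ) else 0))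
      = (∑ i ∈ Finset.range (N+1),
          (if τ i ≤ k ∧ (i = 0 ∨ k < τ (i-1)) then (1:ℤ) else 0)) - 1 := by
    intro k hk
    rw [Finset.mem_Ico] at hk
    rw [Finset.sum_boole, Finset.sum_boole]
    have hfilter : (Finset.range (N+1)).filter
        (fun i => τ i ≤ k ∧ eld N τ i k = i ∧ i ≠ iz N τ)
        = ((Finset.range (N+1)).filter (fun i => τ i ≤ k ∧ eld N τ i k = i)).erase
            (iz N τ) := by
      ext j
      simp only [Finset.mem_filter, Finset.mem_erase, Finset.mem_range]
      tauto
    have hizmem : iz N τ ∈ (Finset.range (N+1)).filter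
        (fun i => τ i ≤ k ∧ eld N τ i k = i) := by
      refine Finset.mem_filter.2 ⟨Finset.mem_range.2 (by have := iz_le_N N τ; omega),
        by omega, eld_iz N τ (by omega)⟩
    have hpos : 1 ≤ ((Finset.range (N+1)).filter
        (fun i => τ i ≤ k ∧ eld N τ i k = i)).card :=
      Finset.card_pos.2 ⟨iz N τ, hizmem⟩
    rw [hfilter, Finset.card_erase_of_mem hizmem, ← comp_card_eq_lep N τ k]
    omega
  -- assemble
  rw [Finset.sum_congr rfl step1, Finset.sum_comm, Finset.sum_congr rfl step2,
    Finset.sum_sub_distrib, Finset.sum_comm (s := Finset.Ico m K)]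
  have hconst : (∑ _k ∈ Finset.Ico m K, (1:ℤ)) = K - m := by
    rw [Finset.sum_const, Int.card_Ico, nsmul_eq_mul, mul_one]
    omega
  rw [hconst]
  -- per index count of left-endpoint levels
  rw [Finset.sum_range_succ']
  have hzero : (∑ k ∈ Finset.Ico m K, (if τ 0 ≤ k ∧ (0 = 0 ∨ k < τ (0-1)) then (1:ℤ) else 0))
      = K := by
    have : ∀ k ∈ Finset.Ico m K,
        (if τ 0 ≤ k ∧ (0 = 0 ∨ k < τ (0-1)) then (1:ℤ) else 0)
        = (if k ∈ Finset.Ico (0:ℤ) K then (1:ℤ) else 0) := by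
      intro k hk
      rw [Finset.mem_Ico] at hk
      by_cases hc : (0:ℤ) ≤ k
      · rw [if_pos ⟨by omega, Or.inl rfl⟩, if_pos (Finset.mem_Ico.2 ⟨hc, hk.2⟩)]
      · rw [if_neg (by push_neg; intro h'; omega), if_neg (by
          rw [Finset.mem_Ico]; push_neg; intro h'; omega)]
    rw [Finset.sum_congr rfl this, Finset.sum_ite_mem]
    have : Finset.Ico m K ∩ Finset.Ico (0:ℤ) K = Finset.Ico (0:ℤ) K := by
      rw [Finset.inter_eq_right]
      exact Finset.Ico_subset_Ico hm0 le_rfl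
    rw [this, Finset.sum_const, Int.card_Ico, nsmul_eq_mul, mul_one]
    omega
  have hsucc : ∀ i ∈ Finset.range N,
      (∑ k ∈ Finset.Ico m K,
        (if τ (i+1) ≤ k ∧ (i+1 = 0 ∨ k < τ (i+1-1)) then (1:ℤ) else 0))
      = max (τ i - τ (i+1)) 0 := by
    intro i hi
    rw [Finset.mem_range] at hi
    have hred : ∀ k ∈ Finset.Ico m K,
        (if τ (i+1) ≤ k ∧ (i+1 = 0 ∨ k < τ (i+1-1)) then (1:ℤ) else 0)
        = (if k ∈ Finset.Ico (τ (i+1)) (τ i) then (1:ℤ) else 0) := by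
      intro k _
      have h11 : i + 1 - 1 = i := by omega
      by_cases hc : τ (i+1) ≤ k ∧ k < τ i
      · rw [if_pos ⟨hc.1, Or.inr (by rw [h11]; exact hc.2)⟩, if_pos (Finset.mem_Ico.2 hc)]
      · rw [if_neg, if_neg (fun hmem => hc (Finset.mem_Ico.1 hmem))]
        rintro ⟨hc1, hc2 | hc2⟩
        · omega
        · rw [h11] at hc2
          exact hc ⟨hc1, hc2⟩
    rw [Finset.sum_congr rfl hred, Finset.sum_ite_mem]
    have : Finset.Ico m K ∩ Finset.Ico (τ (i+1)) (τ i) = Finset.Ico (τ (i+1)) (τ i) := by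
      rw [Finset.inter_eq_right]
      exact Finset.Ico_subset_Ico (hmτ (i+1) (by omega)) (hτK i (by omega))
    rw [this, Finset.sum_const, Int.card_Ico, nsmul_eq_mul, mul_one]
    omega
  rw [Finset.sum_congr rfl hsucc, hzero]
  ring

end GRCount


noncomputable section GRFinal
open Finset

variable (N : ℕ) (τ : ℕ → ℤ)

lemma tau_iz_eq_inf (h : (Finset.range (N+1)).Nonempty) :
    τ (iz N τ) = (Finset.range (N+1)).inf' h τ := by
  apply le_antisymm
  · apply Finset.le_inf'
    intro j hj
    exact tau_iz_le N τ (by rw [Finset.mem_range] at hj; omega)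
  · exact Finset.inf'_le τ (Finset.mem_range.2 (by have := iz_le_N N τ; omega))

lemma PhiL_bij : Function.Bijective (PhiL N τ) := by
  constructor
  · intro a b hab
    have h1 : PhiL N τ (a - b) = 0 := by rw [map_sub, hab, sub_self]
    exact sub_eq_zero.1 (PhiL_inj N τ _ h1)
  · intro x
    exact ⟨⟨psiq N τ x.1 x.2, psiq_mem N τ x.1 x.2⟩, Phi_Psi N τ x.1 x.2⟩

end GRFinal


open Finset in
/-- (Corollary 2.10 / (3.8) of [OSzINV].)  For
`τ : {0,…,T₀} → ℤ` with `τ(1) > τ(0) = 0`, the module `ℍ(R_τ,χ_τ)`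
decomposes as `T⁺_{2m} ⊕ ℍ_red(R_τ,χ_τ)` (a graded `ℤ[U]`-module
isomorphism), where `m = min_i τ(i) = min_v χ_τ(v)` and the `ℤ`-rank of
the finite part `ℍ_red` is `min_i τ(i) + Σ_{i=0}^{T₀−1} max(τ(i)−τ(i+1),0)`. -/
theorem rank_Hred_of_tau
    (T0 : ℕ) (hT0 : 1 ≤ T0) (τ : ℕ → ℤ) (hτ0 : τ 0 = 0) (hτ1 : 0 < τ 1)
    (m : ℤ) (hm : m = (Finset.range (T0 + 1)).inf' ⟨0, by simp⟩ τ) :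
    ∃ (n : ℕ) (rI : Fin n → ℚ) (len : Fin n → ℕ)
      (e : Hmod (rootAdj T0 τ) (rootχ T0 τ) ≃ₗ[ℤ] Targ len),
      (∀ φ, e (HU (rootAdj T0 τ) (rootχ T0 τ) φ) = TargU len (e φ))
      ∧ (∀ (d : ℚ) (φ : Hmod (rootAdj T0 τ) (rootχ T0 τ)),
          HHomog (rootχ T0 τ) 0 d φ.1 ↔ TargHomog (2 * (m : ℚ)) rI d (e φ))
      ∧ (∑ j : Fin n, (len j : ℤ))
          = m + ∑ i ∈ Finset.range T0, max (τ i - τ (i + 1)) 0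
      ∧ (∀ v : RootV T0 τ, m ≤ rootχ T0 τ v)
      ∧ (∃ v : RootV T0 τ, rootχ T0 τ v = m) := by
  have hmiz : m = τ (iz T0 τ) := by rw [hm, ← tau_iz_eq_inf T0 τ ⟨0, by simp⟩]
  refine ⟨T0 + 1, rIF T0 τ, lenF T0 τ,
    LinearEquiv.ofBijective (PhiL T0 τ) (PhiL_bij T0 τ), ?_, ?_, ?_, ?_, ?_⟩
  · intro φ
    exact PhiL_HU T0 τ φ
  · intro d φ
    rw [hmiz]
    exact ⟨homog_fwd T0 τ d φ, homog_bwd T0 τ d φ⟩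
  · rw [show (∑ j : Fin (T0+1), (lenF T0 τ j : ℤ))
        = ∑ i ∈ Finset.range (T0+1), (len T0 τ i : ℤ) from
      Fin.sum_univ_eq_sum_range (fun i => (len T0 τ i : ℤ)) (T0+1)]
    rw [sum_len T0 τ hτ0, hmiz]
  · intro v
    obtain ⟨x, rfl⟩ := Quotient.exists_rep v
    have h1 : rootχ T0 τ (Quotient.mk (RootSetoid T0 τ) x) = x.1.2 := rfl
    rw [h1, hmiz]
    have := tau_iz_le T0 τ x.2.1
    have := x.2.2
    omega
  · refine ⟨rootMk T0 τ (iz T0 τ) m (iz_le_N T0 τ) (le_of_eq hmiz.symm), ?_⟩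
    show m = m
    rfl
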